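/- arXiv:2502.00411 — 3 statements merged into one kernel-verified Lean document; each statement's English description precedes it below -/
import Mathlib

section
/- Let p : T₂ → ℝ be continuous, where T₂ = {(x, y) ∈ [0,1]² : x ≤ y ≤ 1}, and let h : [0,1] → ℝ be continuous. Then there exists a continuous function k : [0,1] → ℝ satisfying the Volterra integral equation k(x) = h(x) − ∫_x^1 p(x, y) k(y) dy for all x ∈ [0,1]. -/
open Set
open MeasureTheory intervalIntegral Function

noncomputable section

namespace Stmt2Aux

abbrev I : Set ℝ := Icc (0:ℝ) 1

/-- The Volterra operator. -/
def T (P : C(ℝ × ℝ, ℝ)) (H : C(ℝ, ℝ)) (k : C(I, ℝ)) : C(I, ℝ) :=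
  ⟨fun x => H x - ∫ y in (x:ℝ)..1, P (x, y) * IccExtend zero_le_one k y, by
    have hek : Continuous (IccExtend zero_le_one k) := k.continuous.Icc_extend'
    have hF : Continuous (Function.uncurry fun (x : I) (y : ℝ) =>
        P ((x:ℝ), y) * IccExtend zero_le_one k y) := by
      apply Continuous.mul
      · exact P.continuous.comp (by fun_prop)
      · exact hek.comp continuous_snd
    have h1 : Continuous fun x : I => ∫ y in (1:ℝ)..(x:ℝ),
        P ((x:ℝ), y) * IccExtend zero_le_one k y :=
      continuous_parametric_intervalIntegral_of_continuous hF continuous_subtype_val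
    have h2 : Continuous fun x : I => ∫ y in (x:ℝ)..(1:ℝ),
        P ((x:ℝ), y) * IccExtend zero_le_one k y := by
      simp_rw [intervalIntegral.integral_symm (1:ℝ)]
      exact h1.neg
    exact ((map_continuous H).comp continuous_subtype_val).sub h2⟩

theorem T_apply (P : C(ℝ × ℝ, ℝ)) (H : C(ℝ, ℝ)) (k : C(I, ℝ)) (x : I) :
    T P H k x = H x - ∫ y in (x:ℝ)..1, P ((x:ℝ), y) * IccExtend zero_le_one k y := rfl

theorem key (P : C(ℝ × ℝ, ℝ)) (H : C(ℝ, ℝ)) {M : ℝ} (hM0 : 0 ≤ M)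
    (hM : ∀ z ∈ Icc (0:ℝ) 1 ×ˢ Icc (0:ℝ) 1, |(P z : ℝ)| ≤ M) (n : ℕ) :
    ∀ (u v : C(I, ℝ)) (x : I),
      |(T P H)^[n] u x - (T P H)^[n] v x|
        ≤ M ^ n * (1 - (x:ℝ)) ^ n / n.factorial * dist u v := by
  induction n with
  | zero =>
    intro u v x
    simp only [Function.iterate_zero, id_eq, pow_zero, Nat.factorial_zero, Nat.cast_one,
      one_mul, div_one]
    rw [← Real.dist_eq]
    exact ContinuousMap.dist_apply_le_dist x
  | succ n ih =>
    intro u v x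
    have hx0 : (0:ℝ) ≤ x := x.2.1
    have hx1 : (x:ℝ) ≤ 1 := x.2.2
    set a := (T P H)^[n] u with ha
    set b := (T P H)^[n] v with hb
    rw [Function.iterate_succ_apply', Function.iterate_succ_apply']
    have hea : Continuous (IccExtend zero_le_one a) := a.continuous.Icc_extend'
    have heb : Continuous (IccExtend zero_le_one b) := b.continuous.Icc_extend'
    have hca : Continuous fun y => P ((x:ℝ), y) * IccExtend zero_le_one a y :=
      Continuous.mul (P.continuous.comp (by fun_prop)) hea
    have hcb : Continuous fun y => P ((x:ℝ), y) * IccExtend zero_le_one b y :=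
      Continuous.mul (P.continuous.comp (by fun_prop)) heb
    have hfa : IntervalIntegrable (fun y => P ((x:ℝ), y) * IccExtend zero_le_one a y)
        volume (x:ℝ) 1 := hca.intervalIntegrable _ _
    have hfb : IntervalIntegrable (fun y => P ((x:ℝ), y) * IccExtend zero_le_one b y)
        volume (x:ℝ) 1 := hcb.intervalIntegrable _ _
    have hsub : T P H a x - T P H b x
        = ∫ y in (x:ℝ)..1, (P ((x:ℝ), y) * IccExtend zero_le_one b y
            - P ((x:ℝ), y) * IccExtend zero_le_one a y) := by
      rw [intervalIntegral.integral_sub hfb hfa, T_apply, T_apply]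
      ring
    rw [hsub]
    have hd0 : (0:ℝ) ≤ dist u v := dist_nonneg
    calc |∫ y in (x:ℝ)..1, (P ((x:ℝ), y) * IccExtend zero_le_one b y
            - P ((x:ℝ), y) * IccExtend zero_le_one a y)|
        ≤ ∫ y in (x:ℝ)..1, |P ((x:ℝ), y) * IccExtend zero_le_one b y
            - P ((x:ℝ), y) * IccExtend zero_le_one a y| :=
          intervalIntegral.abs_integral_le_integral_abs hx1
      _ ≤ ∫ y in (x:ℝ)..1, M * (M ^ n * (1 - y) ^ n / n.factorial * dist u v) := by
          apply intervalIntegral.integral_mono_on hx1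
          · exact (hcb.sub hca).abs.intervalIntegrable _ _
          · exact (by fun_prop : Continuous fun y : ℝ =>
              M * (M ^ n * (1 - y) ^ n / n.factorial * dist u v)).intervalIntegrable _ _
          · intro y hy
            have hy01 : y ∈ Icc (0:ℝ) 1 := ⟨le_trans hx0 hy.1, hy.2⟩
            rw [← mul_sub, abs_mul]
            apply mul_le_mul (hM ((x:ℝ), y) ⟨x.2, hy01⟩) _ (abs_nonneg _)
              hM0
            rw [IccExtend_of_mem _ _ hy01, IccExtend_of_mem _ _ hy01]
            have := ih v u ⟨y, hy01⟩
            rw [dist_comm] at this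
            exact this
      _ = M ^ (n+1) * (1 - (x:ℝ)) ^ (n+1) / (n+1).factorial * dist u v := by
          have h1 : ∀ y : ℝ, M * (M ^ n * (1 - y) ^ n / n.factorial * dist u v)
              = (M * M ^ n * dist u v / n.factorial) * (1 - y) ^ n := by intro y; ring
          simp_rw [h1]
          rw [intervalIntegral.integral_const_mul,
            intervalIntegral.integral_comp_sub_left (fun t => t ^ n) 1]
          norm_num [integral_pow]
          have hnf : (n.factorial : ℝ) ≠ 0 := by positivity
          rw [Nat.factorial_succ]
          push_cast
          field_simp
          ring

end Stmt2Aux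

end


open Stmt2Aux in
/-- For `p` continuous on the triangle `T₂ = {(x,y) ∈ [0,1]² : x ≤ y ≤ 1}` and
`h` continuous on `[0,1]`, the Volterra integral equation
`k(x) = h(x) − ∫_x^1 p(x,y) k(y) dy` has a continuous solution `k` on `[0,1]`. -/
theorem stmt2 (p : ℝ → ℝ → ℝ) (h : ℝ → ℝ)
    (hp : ContinuousOn (fun z : ℝ × ℝ => p z.1 z.2)
      {z : ℝ × ℝ | z.1 ∈ Icc (0:ℝ) 1 ∧ z.2 ∈ Icc (0:ℝ) 1 ∧ z.1 ≤ z.2})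
    (hh : ContinuousOn h (Icc (0:ℝ) 1)) :
    ∃ k : ℝ → ℝ, ContinuousOn k (Icc (0:ℝ) 1) ∧
      ∀ x ∈ Icc (0:ℝ) 1, k x = h x - ∫ y in x..1, p x y * k y := by
  classical
  set s : Set (ℝ × ℝ) := {z : ℝ × ℝ | z.1 ∈ Icc (0:ℝ) 1 ∧ z.2 ∈ Icc (0:ℝ) 1 ∧ z.1 ≤ z.2}
    with hs_def
  have hs_closed : IsClosed s := by
    have : s = (Prod.fst ⁻¹' Icc (0:ℝ) 1) ∩
        ((Prod.snd ⁻¹' Icc (0:ℝ) 1) ∩ {z : ℝ × ℝ | z.1 ≤ z.2}) := rfl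
    rw [this]
    exact (isClosed_Icc.preimage continuous_fst).inter
      ((isClosed_Icc.preimage continuous_snd).inter
        (isClosed_le continuous_fst continuous_snd))
  obtain ⟨P, hP⟩ := (⟨s.restrict (fun z : ℝ × ℝ => p z.1 z.2), hp.restrict⟩ :
    C(s, ℝ)).exists_restrict_eq hs_closed
  have hPp : ∀ z : ℝ × ℝ, z ∈ s → P z = p z.1 z.2 := fun z hz =>
    ContinuousMap.congr_fun hP ⟨z, hz⟩
  obtain ⟨H, hHe⟩ := (⟨(Icc (0:ℝ) 1).restrict h, hh.restrict⟩ :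
    C(Icc (0:ℝ) 1, ℝ)).exists_restrict_eq isClosed_Icc
  have hH : ∀ x ∈ Icc (0:ℝ) 1, H x = h x := fun x hx =>
    ContinuousMap.congr_fun hHe ⟨x, hx⟩
  obtain ⟨M₀, hM₀⟩ := (isCompact_Icc.prod isCompact_Icc).exists_bound_of_continuousOn
    P.continuous.continuousOn
  set M := max M₀ 0 with hMdef
  have hM0 : (0:ℝ) ≤ M := le_max_right _ _
  have hM : ∀ z ∈ Icc (0:ℝ) 1 ×ˢ Icc (0:ℝ) 1, |P z| ≤ M := fun z hz => by
    have := hM₀ z hz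
    rw [Real.norm_eq_abs] at this
    exact this.trans (le_max_left _ _)
  obtain ⟨n, hn⟩ := ((FloorSemiring.tendsto_pow_div_factorial_atTop (K := ℝ) M).eventually
    (gt_mem_nhds one_pos)).exists
  have hK : ContractingWith ⟨M ^ n / n.factorial, by positivity⟩ ((T P H)^[n]) := by
    constructor
    · exact_mod_cast hn
    · apply LipschitzWith.of_dist_le_mul
      intro u v
      change dist _ _ ≤ (M ^ n / (n.factorial : ℝ)) * dist u v
      rw [ContinuousMap.dist_le (by positivity)]
      intro x
      rw [Real.dist_eq]
      refine (key P H hM0 hM n u v x).trans ?_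
      show _ ≤ M ^ n / (n.factorial : ℝ) * dist u v
      have h1x0 : (0:ℝ) ≤ 1 - (x:ℝ) := by linarith [x.2.2]
      have h1x1 : (1:ℝ) - (x:ℝ) ≤ 1 := by linarith [x.2.1]
      calc M ^ n * (1 - (x:ℝ)) ^ n / n.factorial * dist u v
          ≤ M ^ n * 1 ^ n / n.factorial * dist u v := by
            gcongr
        _ = M ^ n / n.factorial * dist u v := by ring
  have hfix : Function.IsFixedPt (T P H)
      (ContractingWith.fixedPoint ((T P H)^[n]) hK) := hK.isFixedPt_fixedPoint_iterate
  set k₀ := ContractingWith.fixedPoint ((T P H)^[n]) hK with hk₀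
  refine ⟨IccExtend zero_le_one k₀, (k₀.continuous.Icc_extend').continuousOn, ?_⟩
  intro x hx
  rw [IccExtend_of_mem _ _ hx]
  calc k₀ ⟨x, hx⟩ = T P H k₀ ⟨x, hx⟩ := (ContinuousMap.congr_fun hfix ⟨x, hx⟩).symm
    _ = H x - ∫ y in x..1, P (x, y) * IccExtend zero_le_one k₀ y := rfl
    _ = h x - ∫ y in x..1, p x y * IccExtend zero_le_one k₀ y := by
        rw [hH x hx]
        congr 1
        apply intervalIntegral.integral_congr
        intro y hy
        rw [uIcc_of_le hx.2] at hy
        have hmem : ((x, y) : ℝ × ℝ) ∈ s := ⟨hx, ⟨le_trans hx.1 hy.1, hy.2⟩, hy.1⟩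
        simp only [hPp _ hmem]
end

section
/- Let μ ∈ ℝ be such that μ ≠ k²π² for every nonnegative integer k. Then for every continuous function v : [0,1] → ℝ there exists exactly one twice continuously differentiable function u : [0,1] → ℝ satisfying u''(x) + μ u(x) = v(x) for all x ∈ [0,1] and the Neumann boundary conditions u'(0) = u'(1) = 0. -/
open Set Real

/-- `u` is a `C²` solution on `[0,1]` (with one-sided derivatives at the endpoints) of the
forced Neumann problem `u'' + μ u = v`, `u'(0) = u'(1) = 0`; `u'` and `u''` are the
first and second derivative functions. -/
def IsNeumannSolution (μ : ℝ) (v u u' u'' : ℝ → ℝ) : Prop :=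
  (∀ x ∈ Icc (0:ℝ) 1, HasDerivWithinAt u (u' x) (Icc (0:ℝ) 1) x) ∧
  (∀ x ∈ Icc (0:ℝ) 1, HasDerivWithinAt u' (u'' x) (Icc (0:ℝ) 1) x) ∧
  ContinuousOn u'' (Icc (0:ℝ) 1) ∧
  (∀ x ∈ Icc (0:ℝ) 1, u'' x + μ * u x = v x) ∧
  u' 0 = 0 ∧ u' 1 = 0

/-- Grönwall-type zero lemma: a solution of the homogeneous linear ODE with zero
initial data at `0` vanishes on `[0,1]`. -/
lemma gron_zero (μ : ℝ) {g g1 : ℝ → ℝ}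
    (hg : ∀ x ∈ Icc (0:ℝ) 1, HasDerivWithinAt g (g1 x) (Icc (0:ℝ) 1) x)
    (hg1 : ∀ x ∈ Icc (0:ℝ) 1, HasDerivWithinAt g1 (-μ * g x) (Icc (0:ℝ) 1) x)
    (h0 : g 0 = 0) (h1 : g1 0 = 0) :
    ∀ x ∈ Icc (0:ℝ) 1, g x = 0 ∧ g1 x = 0 := by
  set K : ℝ := max 1 |μ| with hK
  set f : ℝ → ℝ × ℝ := fun x => (g x, g1 x) with hf
  set f' : ℝ → ℝ × ℝ := fun x => (g1 x, -μ * g x) with hf'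
  have hcont : ContinuousOn f (Icc 0 1) :=
    ContinuousOn.prodMk (fun x hx => (hg x hx).continuousWithinAt)
      (fun x hx => (hg1 x hx).continuousWithinAt)
  have hder : ∀ x ∈ Ico (0:ℝ) 1, HasDerivWithinAt f (f' x) (Ici x) x := by
    intro x hx
    have hmem : Icc (0:ℝ) 1 ∈ nhdsWithin x (Ici x) := Icc_mem_nhdsGE_of_mem hx
    exact (((hg x ⟨hx.1, hx.2.le⟩).mono_of_mem_nhdsWithin hmem).prodMk
      ((hg1 x ⟨hx.1, hx.2.le⟩).mono_of_mem_nhdsWithin hmem))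
  have bound : ∀ x ∈ Ico (0:ℝ) 1, ‖f' x‖ ≤ K * ‖f x‖ + 0 := by
    intro x hx
    rw [add_zero]
    simp only [hf, hf', Prod.norm_def, Real.norm_eq_abs]
    rw [abs_mul, abs_neg]
    apply max_le
    · calc |g1 x| ≤ max |g x| |g1 x| := le_max_right _ _
        _ ≤ K * max |g x| |g1 x| :=
          le_mul_of_one_le_left (le_max_of_le_left (abs_nonneg _)) (le_max_left _ _)
    · calc |μ| * |g x| ≤ |μ| * max |g x| |g1 x| :=
          mul_le_mul_of_nonneg_left (le_max_left _ _) (abs_nonneg _)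
        _ ≤ K * max |g x| |g1 x| :=
          mul_le_mul_of_nonneg_right (le_max_right _ _) (le_max_of_le_left (abs_nonneg _))
  have ha : ‖f 0‖ ≤ 0 := by
    simp [hf, h0, h1, Prod.norm_def]
  have key := norm_le_gronwallBound_of_norm_deriv_right_le hcont hder ha bound
  intro x hx
  have hx0 := key x hx
  rw [gronwallBound_ε0_δ0] at hx0
  have hnorm : ‖f x‖ = 0 := le_antisymm hx0 (norm_nonneg _)
  have hfx : f x = 0 := norm_eq_zero.mp hnorm
  exact ⟨congrArg Prod.fst hfx, congrArg Prod.snd hfx⟩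

/-- A fundamental pair of solutions for `u'' + μ u = 0`, where `c` is the "cosine-like"
solution and the crucial fact `c' 1 ≠ 0` holds because `μ` is not a Neumann eigenvalue. -/
lemma fund_pair (μ : ℝ) (hμ : ∀ k : ℕ, μ ≠ (k : ℝ) ^ 2 * π ^ 2) :
    ∃ c c1 s s1 : ℝ → ℝ,
      (∀ x, HasDerivAt c (c1 x) x) ∧ (∀ x, HasDerivAt c1 (-μ * c x) x) ∧
      (∀ x, HasDerivAt s (s1 x) x) ∧ (∀ x, HasDerivAt s1 (-μ * s x) x) ∧
      (∀ x, s1 x * c x - c1 x * s x = 1) ∧ c 0 = 1 ∧ c1 0 = 0 ∧ c1 1 ≠ 0 := by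
  have hμ0 : μ ≠ 0 := by simpa using hμ 0
  rcases lt_or_gt_of_ne hμ0 with hneg | hpos
  · -- μ < 0 : hyperbolic solutions
    set ω := Real.sqrt (-μ) with hω
    have hω0 : 0 < ω := Real.sqrt_pos.mpr (by linarith)
    have hω2 : ω ^ 2 = -μ := Real.sq_sqrt (by linarith)
    have hlin : ∀ x : ℝ, HasDerivAt (fun y => ω * y) ω x := fun x => by
      simpa using (hasDerivAt_id x).const_mul ω
    refine ⟨fun x => Real.cosh (ω * x), fun x => Real.sinh (ω * x) * ω,
            fun x => ω⁻¹ * Real.sinh (ω * x), fun x => Real.cosh (ω * x),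
            ?_, ?_, ?_, ?_, ?_, ?_, ?_, ?_⟩
    · intro x; exact (hlin x).cosh
    · intro x
      have h := ((hlin x).sinh).mul_const ω
      exact h.congr_deriv (by linear_combination (Real.cosh (ω * x)) * hω2)
    · intro x
      have h := ((hlin x).sinh).const_mul ω⁻¹
      exact h.congr_deriv (by field_simp)
    · intro x
      have h := (hlin x).cosh
      convert h using 1
      rw [show μ = -(ω ^ 2) by linarith]
      field_simp
    · intro x
      have h := Real.cosh_sq_sub_sinh_sq (ω * x)
      field_simp
      linear_combination h
    · simp
    · simp
    · simp only [mul_one]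
      exact mul_ne_zero (ne_of_gt (Real.sinh_pos_iff.mpr hω0)) (ne_of_gt hω0)
  · -- μ > 0 : trigonometric solutions
    set ω := Real.sqrt μ with hω
    have hω0 : 0 < ω := Real.sqrt_pos.mpr hpos
    have hω2 : ω ^ 2 = μ := Real.sq_sqrt hpos.le
    have hlin : ∀ x : ℝ, HasDerivAt (fun y => ω * y) ω x := fun x => by
      simpa using (hasDerivAt_id x).const_mul ω
    refine ⟨fun x => Real.cos (ω * x), fun x => -Real.sin (ω * x) * ω,
            fun x => ω⁻¹ * Real.sin (ω * x), fun x => Real.cos (ω * x),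
            ?_, ?_, ?_, ?_, ?_, ?_, ?_, ?_⟩
    · intro x; exact (hlin x).cos
    · intro x
      have h := (((hlin x).sin).neg).mul_const ω
      exact h.congr_deriv (by linear_combination (-Real.cos (ω * x)) * hω2)
    · intro x
      have h := ((hlin x).sin).const_mul ω⁻¹
      exact h.congr_deriv (by field_simp)
    · intro x
      have h := (hlin x).cos
      convert h using 1
      rw [show μ = ω ^ 2 by linarith]
      field_simp
    · intro x
      have h := Real.sin_sq_add_cos_sq (ω * x)
      field_simp
      linear_combination h
    · simp
    · simp
    · simp only [mul_one]
      have hsin : Real.sin ω ≠ 0 := by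
        intro h
        rcases Real.sin_eq_zero_iff.mp h with ⟨n, hn⟩
        have hπ : (0:ℝ) < π := Real.pi_pos
        have hn0 : 0 ≤ n := by
          by_contra hn'
          push_neg at hn'
          have : (n : ℝ) < 0 := by exact_mod_cast hn'
          nlinarith
        apply hμ n.toNat
        have hcast : ((n.toNat : ℕ) : ℝ) = (n : ℝ) := by
          exact_mod_cast Int.toNat_of_nonneg hn0
        rw [hcast]
        linear_combination -hω2 + (-((n : ℝ) * π + ω)) * hn
      exact mul_ne_zero (neg_ne_zero.mpr hsin) (ne_of_gt hω0)

/-- Existence of a global solution of `u'' + μ u = v` with Neumann conditions,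
via variation of parameters. -/
lemma exist_glob (μ : ℝ) (v : ℝ → ℝ) (hv : Continuous v)
    {c c1 s s1 : ℝ → ℝ}
    (hc : ∀ x, HasDerivAt c (c1 x) x) (hc1 : ∀ x, HasDerivAt c1 (-μ * c x) x)
    (hs : ∀ x, HasDerivAt s (s1 x) x) (hs1 : ∀ x, HasDerivAt s1 (-μ * s x) x)
    (hW : ∀ x, s1 x * c x - c1 x * s x = 1) (hc10 : c1 0 = 0) (hc11 : c1 1 ≠ 0) :
    ∃ u u' : ℝ → ℝ, (∀ x, HasDerivAt u (u' x) x) ∧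
      (∀ x, HasDerivAt u' (v x - μ * u x) x) ∧ u' 0 = 0 ∧ u' 1 = 0 := by
  have hccont : Continuous c := by
    rw [continuous_iff_continuousAt]; exact fun x => (hc x).continuousAt
  have hscont : Continuous s := by
    rw [continuous_iff_continuousAt]; exact fun x => (hs x).continuousAt
  set C : ℝ → ℝ := fun x => ∫ t in (0:ℝ)..x, c t * v t with hCdef
  set S : ℝ → ℝ := fun x => ∫ t in (0:ℝ)..x, s t * v t with hSdef
  have hC : ∀ x, HasDerivAt C (c x * v x) x := fun x =>
    ((hccont.mul hv).integral_hasStrictDerivAt 0 x).hasDerivAt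
  have hS : ∀ x, HasDerivAt S (s x * v x) x := fun x =>
    ((hscont.mul hv).integral_hasStrictDerivAt 0 x).hasDerivAt
  have hC0 : C 0 = 0 := intervalIntegral.integral_same
  have hS0 : S 0 = 0 := intervalIntegral.integral_same
  set A : ℝ := -(s1 1 * C 1 - c1 1 * S 1) / c1 1 with hA
  refine ⟨fun x => A * c x + (s x * C x - c x * S x),
          fun x => A * c1 x + (s1 x * C x - c1 x * S x), ?_, ?_, ?_, ?_⟩
  · intro x
    have h := ((hc x).const_mul A).add (((hs x).mul (hC x)).sub ((hc x).mul (hS x)))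
    exact h.congr_deriv (by ring)
  · intro x
    have h := ((hc1 x).const_mul A).add (((hs1 x).mul (hC x)).sub ((hc1 x).mul (hS x)))
    exact h.congr_deriv (by linear_combination (v x) * hW x)
  · show A * c1 0 + (s1 0 * C 0 - c1 0 * S 0) = 0
    rw [hc10, hC0, hS0]; ring
  · show A * c1 1 + (s1 1 * C 1 - c1 1 * S 1) = 0
    rw [hA]
    field_simp
    ring
/-- If `μ ≠ k²π²` for every `k ∈ ℕ`, then for every continuous `v` on `[0,1]`
the forced Neumann problem `u'' + μu = v`, `u'(0) = u'(1) = 0` has exactly one `C²`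
solution on `[0,1]`. -/
theorem stmt6 (μ : ℝ) (hμ : ∀ k : ℕ, μ ≠ (k : ℝ) ^ 2 * π ^ 2)
    (v : ℝ → ℝ) (hv : ContinuousOn v (Icc (0:ℝ) 1)) :
    (∃ u u' u'' : ℝ → ℝ, IsNeumannSolution μ v u u' u'') ∧
    (∀ u₁ u₁' u₁'' u₂ u₂' u₂'' : ℝ → ℝ,
      IsNeumannSolution μ v u₁ u₁' u₁'' → IsNeumannSolution μ v u₂ u₂' u₂'' →
        EqOn u₁ u₂ (Icc (0:ℝ) 1)) := by
  obtain ⟨c, c1, s, s1, hc, hc1, hs, hs1, hW, hc0, hc10, hc11⟩ := fund_pair μ hμ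
  constructor
  · -- existence
    set w : ℝ → ℝ := fun x => v (max 0 (min 1 x)) with hw
    have hgmem : ∀ x : ℝ, max 0 (min 1 x) ∈ Icc (0:ℝ) 1 :=
      fun x => ⟨le_max_left _ _, max_le zero_le_one (min_le_left _ _)⟩
    have hwc : Continuous w :=
      hv.comp_continuous (continuous_const.max (continuous_const.min continuous_id)) hgmem
    have hwv : ∀ x ∈ Icc (0:ℝ) 1, w x = v x := by
      intro x hx
      show v (max 0 (min 1 x)) = v x
      rw [min_eq_right hx.2, max_eq_right hx.1]
    obtain ⟨u, u', hu, hu', hb0, hb1⟩ := exist_glob μ w hwc hc hc1 hs hs1 hW hc10 hc11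
    have hucont : Continuous u := by
      rw [continuous_iff_continuousAt]; exact fun x => (hu x).continuousAt
    refine ⟨u, u', fun x => w x - μ * u x,
      fun x hx => (hu x).hasDerivWithinAt,
      fun x hx => (hu' x).hasDerivWithinAt,
      (hwc.sub (continuous_const.mul hucont)).continuousOn,
      fun x hx => by show w x - μ * u x + μ * u x = v x; linarith [hwv x hx], hb0, hb1⟩
  · -- uniqueness
    intro u₁ u₁' u₁'' u₂ u₂' u₂'' h1 h2
    obtain ⟨hd1, hdd1, _, he1, hb10, hb11⟩ := h1
    obtain ⟨hd2, hdd2, _, he2, hb20, hb21⟩ := h2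
    have hg : ∀ x ∈ Icc (0:ℝ) 1,
        HasDerivWithinAt (fun x => u₁ x - u₂ x) (u₁' x - u₂' x) (Icc (0:ℝ) 1) x :=
      fun x hx => (hd1 x hx).sub (hd2 x hx)
    have hg1 : ∀ x ∈ Icc (0:ℝ) 1,
        HasDerivWithinAt (fun x => u₁' x - u₂' x) (-μ * (u₁ x - u₂ x)) (Icc (0:ℝ) 1) x := by
      intro x hx
      have h := (hdd1 x hx).sub (hdd2 x hx)
      have heq : u₁'' x - u₂'' x = -μ * (u₁ x - u₂ x) := by
        have e1 := he1 x hx; have e2 := he2 x hx; linarith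
      rwa [heq] at h
    set a : ℝ := u₁ 0 - u₂ 0 with haz
    have hh : ∀ x ∈ Icc (0:ℝ) 1,
        HasDerivWithinAt (fun x => (u₁ x - u₂ x) - a * c x)
          ((u₁' x - u₂' x) - a * c1 x) (Icc (0:ℝ) 1) x :=
      fun x hx => (hg x hx).sub (((hc x).const_mul a).hasDerivWithinAt)
    have hh1 : ∀ x ∈ Icc (0:ℝ) 1,
        HasDerivWithinAt (fun x => (u₁' x - u₂' x) - a * c1 x)
          (-μ * ((u₁ x - u₂ x) - a * c x)) (Icc (0:ℝ) 1) x := by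
      intro x hx
      have h := (hg1 x hx).sub (((hc1 x).const_mul a).hasDerivWithinAt)
      exact h.congr_deriv (by ring)
    have key := gron_zero μ hh hh1
      (by simp [hc0, haz]) (by simp [hc10, hb10, hb20])
    have h1mem : (1:ℝ) ∈ Icc (0:ℝ) 1 := ⟨zero_le_one, le_refl 1⟩
    have ha : a = 0 := by
      have hk := (key 1 h1mem).2
      rw [hb11, hb21] at hk
      have : a * c1 1 = 0 := by linarith
      exact (mul_eq_zero.mp this).resolve_right hc11
    intro x hx
    have hk := (key x hx).1
    rw [ha] at hk
    have : u₁ x - u₂ x = 0 := by linarith [hk]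
    linarith
end

section
/- Let n ≥ 1, let A ∈ ℝ^{n×n} be the upper-shift matrix (A_{i,i+1} = 1 for 1 ≤ i ≤ n−1 and all other entries zero) and let B ∈ ℝ^n be the standard basis vector with last entry 1 and all other entries 0. Let c ∈ ℝ, let k ≥ 1 be an integer, and set λ_k = c − k²π²; assume λ_k ≠ 0. Define u_k(x) = cos(kπx) and Y ∈ ℝ^n by Y_i = λ_k^{−(n+1−i)} for 1 ≤ i ≤ n (so Y = (λ_k^{−n}, λ_k^{−n+1}, …, λ_k^{−1})). Then: (i) A·Y + B·u_k(0) = λ_k Y; (ii) u_k''(x) + c·u_k(x) = λ_k u_k(x) for all x ∈ [0,1]; (iii) u_k'(0) = u_k'(1) = 0. -/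
open Set Real Matrix

/-- For the Brunovsky pair `(A, B)` (upper-shift matrix and last standard basis
vector), `c ∈ ℝ`, `k ≥ 1`, `λ_k = c − k²π² ≠ 0`, `u_k(x) = cos(kπx)` and
`Y = (λ_k^{−n}, …, λ_k^{−1})`, one has: (i) `A·Y + u_k(0)·B = λ_k Y`;
(ii) `u_k'' + c u_k = λ_k u_k` on `[0,1]`; (iii) `u_k'(0) = u_k'(1) = 0`. -/
theorem stmt7 (n : ℕ) (hn : 1 ≤ n) (A : Matrix (Fin n) (Fin n) ℝ) (B : Fin n → ℝ)
    (hA : ∀ i j : Fin n, A i j = if (i : ℕ) + 1 = (j : ℕ) then 1 else 0)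
    (hB : ∀ i : Fin n, B i = if (i : ℕ) = n - 1 then 1 else 0)
    (c : ℝ) (k : ℕ) (hk : 1 ≤ k) (lam : ℝ)
    (hlam : lam = c - (k : ℝ) ^ 2 * π ^ 2) (hne : lam ≠ 0)
    (u : ℝ → ℝ) (hu : ∀ x : ℝ, u x = Real.cos ((k : ℝ) * π * x))
    (Y : Fin n → ℝ) (hY : ∀ i : Fin n, Y i = lam ^ (-(((n : ℤ)) - ((i : ℕ) : ℤ)))) :
    (A.mulVec Y + u 0 • B = lam • Y) ∧
    (∀ x ∈ Icc (0:ℝ) 1, deriv (deriv u) x + c * u x = lam * u x) ∧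
    deriv u 0 = 0 ∧ deriv u 1 = 0 := by
  have huf : u = fun x => Real.cos ((k : ℝ) * π * x) := funext hu
  set a : ℝ := (k : ℝ) * π with ha
  -- derivative facts
  have hd1 : ∀ x : ℝ, HasDerivAt u (-(a * Real.sin (a * x))) x := by
    intro x
    have hinner : HasDerivAt (fun y : ℝ => a * y) a x := by
      simpa using (hasDerivAt_id x).const_mul a
    have h := (Real.hasDerivAt_cos (a * x)).comp x hinner
    have hval : -(a * Real.sin (a * x)) = -Real.sin (a * x) * a := by ring
    rw [huf, hval]; exact h
  have hderiv1 : deriv u = fun x => -(a * Real.sin (a * x)) := by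
    funext x; exact (hd1 x).deriv
  have hd2 : ∀ x : ℝ, HasDerivAt (deriv u) (-(a * (a * Real.cos (a * x)))) x := by
    intro x
    have hinner : HasDerivAt (fun y : ℝ => a * y) a x := by
      simpa using (hasDerivAt_id x).const_mul a
    have h := (((Real.hasDerivAt_sin (a * x)).comp x hinner).const_mul a).neg
    have hval : -(a * (a * Real.cos (a * x))) = -(a * (Real.cos (a * x) * a)) := by ring
    rw [hderiv1, hval]; exact h
  refine ⟨?_, ?_, ?_, ?_⟩
  · -- matrix identity
    funext i
    have hu0 : u 0 = 1 := by simp [hu]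
    simp only [Pi.add_apply, Pi.smul_apply, smul_eq_mul, Matrix.mulVec, dotProduct]
    by_cases h : (i : ℕ) + 1 < n
    · set j0 : Fin n := ⟨(i : ℕ) + 1, h⟩ with hj0
      have hsum : ∑ j, A i j * Y j = Y j0 := by
        have : ∀ j : Fin n, A i j * Y j = if j0 = j then Y j else 0 := by
          intro j
          by_cases hj : j0 = j
          · subst hj; simp [hA, hj0]
          · have : (i : ℕ) + 1 ≠ (j : ℕ) := by
              intro hc; exact hj (Fin.ext hc)
            simp [hA, this, hj]
        rw [Finset.sum_congr rfl fun j _ => this j]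
        simp
      rw [hsum]
      have hBi : B i = 0 := by
        have : (i : ℕ) ≠ n - 1 := by omega
        simp [hB, this]
      rw [hBi, hu0]
      rw [hY, hY]
      have harg : -((n : ℤ) - ((j0 : ℕ) : ℤ)) = 1 + -((n : ℤ) - ((i : ℕ) : ℤ)) := by
        simp [hj0]; push_cast; ring
      rw [harg, zpow_add₀ hne]
      simp [mul_comm]
    · -- last row: i = n - 1
      have hi : (i : ℕ) = n - 1 := by have := i.isLt; omega
      have hsum : ∑ j, A i j * Y j = 0 := by
        apply Finset.sum_eq_zero
        intro j _
        have : (i : ℕ) + 1 ≠ (j : ℕ) := by have := j.isLt; omega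
        simp [hA, this]
      rw [hsum, hu0]
      have hBi : B i = 1 := by simp [hB, hi]
      rw [hBi, hY]
      have harg : -((n : ℤ) - ((i : ℕ) : ℤ)) = -1 := by
        have := i.isLt; omega
      rw [harg, _root_.zpow_neg_one]
      field_simp
      norm_num
  · intro x _
    have h2 : deriv (deriv u) x = -(a * (a * Real.cos (a * x))) := (hd2 x).deriv
    rw [h2, hu, hlam, ha]
    ring
  · have : deriv u 0 = -(a * Real.sin (a * 0)) := (hd1 0).deriv
    simp [this]
  · have : deriv u 1 = -(a * Real.sin (a * 1)) := (hd1 1).deriv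
    rw [this]
    simp [ha, Real.sin_nat_mul_pi]
end
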